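/- Let X be a projective variety over an algebraically closed field on which every 1-cycle is rationally equivalent to an integral linear combination of lines, and suppose the Fano scheme of lines F(X) is connected and rationally chain connected (so any two lines on X are algebraically equivalent). Then the Griffiths group Griff_1(X) of 1-cycles homologically trivial modulo algebraic equivalence is trivial, and CH_1(X)/alg ≅ Z generated by the class of a line. -/

import Mathlib

/-!
STATEMENT 15: X ⊆ P^n a projective variety over an algebraically closed field such that
(1) CH_1(X) is generated by the classes of lines on X, and (2) any two lines on X are
algebraically equivalent (e.g. the Fano scheme of lines F(X) is connected and rationally
chain connected).  Then CH_1(X) modulo algebraic equivalence is cyclic, generated by the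
class of a line, and the Griffiths group of 1-cycles (homologically trivial cycles modulo
algebraic equivalence) is trivial: every homologically trivial class is algebraically
trivial.

Encoding: `A = CH_1(X)`, `Lines ⊆ A` the set of classes of lines (nonempty, with a chosen
line class `ℓ₀`), `B ≤ A` the subgroup of classes algebraically equivalent to 0,
`cl : A →+ H` the cycle class map to homology (vanishing on B), and `degH : H →+ ℤ` the
degree on homology, taking value 1 on the class of any line.
-/
theorem griffiths_trivial_of_generated_by_lines
    (A : Type*) [AddCommGroup A]
    (Lines : Set A) (ℓ₀ : A) (hℓ₀ : ℓ₀ ∈ Lines)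
    (hgen : AddSubgroup.closure Lines = (⊤ : AddSubgroup A))
    (B : AddSubgroup A)
    (halg : ∀ l ∈ Lines, ∀ l' ∈ Lines, l - l' ∈ B)
    (H : Type*) [AddCommGroup H]
    (cl : A →+ H) (hB : ∀ b ∈ B, cl b = 0)
    (degH : H →+ ℤ) (hdeg : ∀ l ∈ Lines, degH (cl l) = 1) :
    (∀ a : A, ∃ m : ℤ, a - m • ℓ₀ ∈ B) ∧ (∀ a : A, cl a = 0 → a ∈ B) := by
  have key : ∀ a : A, ∃ m : ℤ, a - m • ℓ₀ ∈ B := by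
    intro a
    have ha : a ∈ AddSubgroup.closure Lines := by rw [hgen]; trivial
    induction ha using AddSubgroup.closure_induction with
    | mem l hl =>
        exact ⟨1, by simpa using halg l hl ℓ₀ hℓ₀⟩
    | zero => exact ⟨0, by simpa using B.zero_mem⟩
    | add x y _ _ hx hy =>
        obtain ⟨m, hm⟩ := hx
        obtain ⟨m', hm'⟩ := hy
        refine ⟨m + m', ?_⟩
        have := B.add_mem hm hm'
        convert this using 1
        rw [add_smul]; abel
    | neg x _ hx =>
        obtain ⟨m, hm⟩ := hx
        refine ⟨-m, ?_⟩
        have := B.neg_mem hm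
        convert this using 1
        rw [neg_smul]; abel
  refine ⟨key, fun a ha => ?_⟩
  obtain ⟨m, hm⟩ := key a
  have h1 : cl (a - m • ℓ₀) = 0 := hB _ hm
  have h2 : (m : ℤ) • cl ℓ₀ = 0 := by
    have h3 : cl a - m • cl ℓ₀ = 0 := by simpa using h1
    rw [ha] at h3
    simpa using h3.symm
  have hm0 : m = 0 := by
    have := congrArg degH h2
    simpa [hdeg ℓ₀ hℓ₀] using this
  simpa [hm0] using hm
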